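/- arXiv:1705.00694 — 3 statements merged into one kernel-verified Lean document; each statement's English description precedes it below -/
import Mathlib

section
/- The number of transitive irreflexive relations R on the disjoint union of three linearly ordered chains of sizes d₁, d₂, d₃ ≤ d, such that R extends the three chain orders and is 'upward closed across chains' (if x from one chain relates to y in another chain then x relates to every element above y in that chain), is at most 2^{12d}. -/
/-- The vertex set: a disjoint union of three chains. -/
abbrev ProfileVertex (d₁ d₂ d₃ : ℕ) := Fin d₁ ⊕ Fin d₂ ⊕ Fin d₃

/-- Index of the chain a vertex belongs to. -/
def chainIdx {d₁ d₂ d₃ : ℕ} : ProfileVertex d₁ d₂ d₃ → ℕ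
  | .inl _ => 0
  | .inr (.inl _) => 1
  | .inr (.inr _) => 2

/-- Height of a vertex inside its chain. -/
def chainHt {d₁ d₂ d₃ : ℕ} : ProfileVertex d₁ d₂ d₃ → ℕ
  | .inl x => x
  | .inr (.inl x) => x
  | .inr (.inr x) => x

open Classical in
/-- Threshold of a cross relation. -/
noncomputable def pthr {a b : ℕ} (c : Fin a → Fin b → Prop) (x : Fin a) : ℕ :=
  (Finset.univ.filter (fun y => ¬ c x y)).card

lemma pthr_le {a b : ℕ} (c : Fin a → Fin b → Prop) (x : Fin a) : pthr c x ≤ b := by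
  classical
  calc pthr c x ≤ Finset.univ.card := Finset.card_filter_le _ _
  _ = b := by simp

/-- A down-closed finset in `Fin b` is an initial segment. -/
lemma seg_mem_iff {b : ℕ} (s : Finset (Fin b))
    (hdc : ∀ i j : Fin b, j ≤ i → i ∈ s → j ∈ s) (i : Fin b) :
    i ∈ s ↔ i.val < s.card := by
  constructor
  · intro hi
    have hsub : Finset.Iic i ⊆ s := fun j hj => hdc i j (Finset.mem_Iic.mp hj) hi
    have := Finset.card_le_card hsub
    rw [Fin.card_Iic] at this
    omega
  · intro hi
    by_contra his
    have hsub : s ⊆ Finset.Iio i := by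
      intro j hj
      rw [Finset.mem_Iio]
      by_contra hji
      exact his (hdc j i (le_of_not_gt hji) hj)
    have := Finset.card_le_card hsub
    rw [Fin.card_Iio] at this
    omega

lemma pthr_iff {a b : ℕ} {c : Fin a → Fin b → Prop}
    (hup : ∀ x (y y' : Fin b), y ≤ y' → c x y → c x y') (x : Fin a) (y : Fin b) :
    c x y ↔ pthr c x ≤ y.val := by
  classical
  have h := seg_mem_iff (Finset.univ.filter (fun y => ¬ c x y))
    (by
      intro i j hji hi
      simp only [Finset.mem_filter, Finset.mem_univ, true_and] at hi ⊢
      exact fun hcj => hi (hup x j i hji hcj)) y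
  simp only [Finset.mem_filter, Finset.mem_univ, true_and] at h
  unfold pthr
  constructor
  · intro hc
    by_contra hlt
    exact h.mpr (by omega) hc
  · intro hle
    by_contra hc
    have := h.mp hc
    omega

lemma pthr_mono {a b : ℕ} {c : Fin a → Fin b → Prop}
    (hdn : ∀ (x x' : Fin a) y, x ≤ x' → c x' y → c x y) :
    Monotone (pthr c) := by
  classical
  intro x x' hxx
  apply Finset.card_le_card
  intro y hy
  simp only [Finset.mem_filter, Finset.mem_univ, true_and] at hy ⊢
  exact fun hc => hy (hdn x x' y hxx hc)

/-- The encoding of a cross relation as a finset. -/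
noncomputable def penc {a b : ℕ} (c : Fin a → Fin b → Prop) : Finset (Fin (a + b)) :=
  Finset.univ.image (fun x : Fin a =>
    (⟨x.val + pthr c x, by have := pthr_le c x; omega⟩ : Fin (a + b)))

lemma penc_strictMono {a b : ℕ} (c : Fin a → Fin b → Prop)
    (hdn : ∀ (x x' : Fin a) y, x ≤ x' → c x' y → c x y) :
    StrictMono (fun x : Fin a =>
      (⟨x.val + pthr c x, by have := pthr_le c x; omega⟩ : Fin (a + b))) := by
  intro x x' hxx
  have h1 : pthr c x ≤ pthr c x' := pthr_mono hdn (le_of_lt hxx)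
  have h2 : x.val < x'.val := hxx
  simp only [Fin.mk_lt_mk]
  omega

lemma penc_inj {a b : ℕ} {c c' : Fin a → Fin b → Prop}
    (hup : ∀ x (y y' : Fin b), y ≤ y' → c x y → c x y')
    (hdn : ∀ (x x' : Fin a) y, x ≤ x' → c x' y → c x y)
    (hup' : ∀ x (y y' : Fin b), y ≤ y' → c' x y → c' x y')
    (hdn' : ∀ (x x' : Fin a) y, x ≤ x' → c' x' y → c' x y)
    (h : penc c = penc c') : c = c' := by
  classical
  set f : Fin a → Fin (a + b) := fun x =>
    (⟨x.val + pthr c x, by have := pthr_le c x; omega⟩ : Fin (a + b)) with hf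
  set f' : Fin a → Fin (a + b) := fun x =>
    (⟨x.val + pthr c' x, by have := pthr_le c' x; omega⟩ : Fin (a + b)) with hf'
  have hmf : StrictMono f := penc_strictMono c hdn
  have hmf' : StrictMono f' := penc_strictMono c' hdn'
  have hcard : (penc c).card = a := by
    rw [penc, Finset.card_image_of_injective _ hmf.injective, Finset.card_univ,
      Fintype.card_fin]
  have hfs : ∀ x, f x ∈ penc c := fun x => Finset.mem_image_of_mem _ (Finset.mem_univ x)
  have hfs' : ∀ x, f' x ∈ penc c := fun x => by
    rw [h]; exact Finset.mem_image_of_mem _ (Finset.mem_univ x)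
  have heq : f = f' := by
    rw [Finset.orderEmbOfFin_unique hcard hfs hmf,
      Finset.orderEmbOfFin_unique hcard hfs' hmf']
  have hthr : ∀ x, pthr c x = pthr c' x := by
    intro x
    have := congrFun heq x
    simp only [hf, hf', Fin.mk.injEq] at this
    omega
  funext x y
  apply propext
  rw [pthr_iff hup, pthr_iff hup', hthr]

section Cross
variable {d₁ d₂ d₃ a b : ℕ} {R : ProfileVertex d₁ d₂ d₃ → ProfileVertex d₁ d₂ d₃ → Prop}

lemma cross_up
    (h6 : ∀ x y y', chainIdx x ≠ chainIdx y → chainIdx y = chainIdx y' →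
      chainHt y ≤ chainHt y' → R x y → R x y')
    (ea : Fin a → ProfileVertex d₁ d₂ d₃) (eb : Fin b → ProfileVertex d₁ d₂ d₃)
    (hne : ∀ x y, chainIdx (ea x) ≠ chainIdx (eb y))
    (hidx : ∀ y y', chainIdx (eb y) = chainIdx (eb y'))
    (hht : ∀ y : Fin b, chainHt (eb y) = y.val) :
    ∀ x (y y' : Fin b), y ≤ y' → R (ea x) (eb y) → R (ea x) (eb y') :=
  fun x y y' hyy h =>
    h6 _ _ _ (hne x y) (hidx y y') (by rw [hht, hht]; exact hyy) h

lemma cross_dn (htr : ∀ x y z, R x y → R y z → R x z)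
    (ea : Fin a → ProfileVertex d₁ d₂ d₃) (eb : Fin b → ProfileVertex d₁ d₂ d₃)
    (ho : ∀ x y : Fin a, x < y → R (ea x) (ea y)) :
    ∀ (x x' : Fin a) (y : Fin b), x ≤ x' → R (ea x') (eb y) → R (ea x) (eb y) := by
  intro x x' y hxx h
  rcases eq_or_lt_of_le hxx with h' | h'
  · rwa [h']
  · exact htr _ _ _ (ho x x' h') h

lemma same_iff (hirr : ∀ x, ¬ R x x) (htr : ∀ x y z, R x y → R y z → R x z)
    (ea : Fin a → ProfileVertex d₁ d₂ d₃)
    (ho : ∀ x y : Fin a, x < y → R (ea x) (ea y)) (x y : Fin a) :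
    R (ea x) (ea y) ↔ x < y := by
  constructor
  · intro h
    by_contra hxy
    rcases eq_or_lt_of_le (le_of_not_gt hxy) with h' | h'
    · rw [h'] at h; exact hirr _ h
    · exact hirr _ (htr _ _ _ h (ho y x h'))
  · exact ho x y

end Cross

/-- The number of transitive irreflexive relations on the disjoint union of
three chains of sizes `d₁, d₂, d₃ ≤ d` that extend the three chain orders and
are upward closed across chains is at most `2^(12d)`. -/
theorem stmt5 (d d₁ d₂ d₃ : ℕ) (h₁ : d₁ ≤ d) (h₂ : d₂ ≤ d) (h₃ : d₃ ≤ d) :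
    Set.ncard {R : ProfileVertex d₁ d₂ d₃ → ProfileVertex d₁ d₂ d₃ → Prop |
        (∀ x, ¬ R x x) ∧
        (∀ x y z, R x y → R y z → R x z) ∧
        (∀ x y : Fin d₁, x < y → R (.inl x) (.inl y)) ∧
        (∀ x y : Fin d₂, x < y → R (.inr (.inl x)) (.inr (.inl y))) ∧
        (∀ x y : Fin d₃, x < y → R (.inr (.inr x)) (.inr (.inr y))) ∧
        (∀ x y y', chainIdx x ≠ chainIdx y → chainIdx y = chainIdx y' →
          chainHt y ≤ chainHt y' → R x y → R x y')}
      ≤ 2 ^ (12 * d) := by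
  classical
  set e1 : Fin d₁ → ProfileVertex d₁ d₂ d₃ := Sum.inl with he1
  set e2 : Fin d₂ → ProfileVertex d₁ d₂ d₃ := fun x => Sum.inr (Sum.inl x) with he2
  set e3 : Fin d₃ → ProfileVertex d₁ d₂ d₃ := fun x => Sum.inr (Sum.inr x) with he3
  set F : (ProfileVertex d₁ d₂ d₃ → ProfileVertex d₁ d₂ d₃ → Prop) →
      Finset (Fin (d₁ + d₂)) × Finset (Fin (d₁ + d₃)) × Finset (Fin (d₂ + d₁)) ×
      Finset (Fin (d₂ + d₃)) × Finset (Fin (d₃ + d₁)) × Finset (Fin (d₃ + d₂)) :=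
    fun R => (penc (fun x y => R (e1 x) (e2 y)), penc (fun x y => R (e1 x) (e3 y)),
      penc (fun x y => R (e2 x) (e1 y)), penc (fun x y => R (e2 x) (e3 y)),
      penc (fun x y => R (e3 x) (e1 y)), penc (fun x y => R (e3 x) (e2 y))) with hF
  refine le_trans (Set.ncard_le_ncard_of_injOn F (fun R _ => Set.mem_univ (F R)) ?_
    Set.finite_univ) ?_
  swap
  · rw [Set.ncard_univ, Nat.card_eq_fintype_card]
    have : 2 ^ ((d₁+d₂)+((d₁+d₃)+((d₂+d₁)+((d₂+d₃)+((d₃+d₁)+(d₃+d₂)))))) ≤ 2 ^ (12 * d) :=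
      Nat.pow_le_pow_right (by norm_num) (by omega)
    refine le_trans (le_of_eq ?_) this
    simp [Fintype.card_prod, Fintype.card_finset, pow_add]
  · rintro R hR R' hR' hEq
    obtain ⟨hirr, htr, ho1, ho2, ho3, h6⟩ := hR
    obtain ⟨hirr', htr', ho1', ho2', ho3', h6'⟩ := hR'
    simp only [hF, Prod.mk.injEq] at hEq
    obtain ⟨q12, q13, q21, q23, q31, q32⟩ := hEq
    have hidx1 : ∀ x : Fin d₁, chainIdx (e1 x) = 0 := fun _ => rfl
    have hidx2 : ∀ x : Fin d₂, chainIdx (e2 x) = 1 := fun _ => rfl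
    have hidx3 : ∀ x : Fin d₃, chainIdx (e3 x) = 2 := fun _ => rfl
    have hht1 : ∀ x : Fin d₁, chainHt (e1 x) = x.val := fun _ => rfl
    have hht2 : ∀ x : Fin d₂, chainHt (e2 x) = x.val := fun _ => rfl
    have hht3 : ∀ x : Fin d₃, chainHt (e3 x) = x.val := fun _ => rfl
    have c12 := penc_inj (cross_up h6 e1 e2 (by simp [hidx1, hidx2]) (by simp [hidx2]) hht2)
      (cross_dn htr e1 e2 ho1) (cross_up h6' e1 e2 (by simp [hidx1, hidx2]) (by simp [hidx2]) hht2)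
      (cross_dn htr' e1 e2 ho1') q12
    have c13 := penc_inj (cross_up h6 e1 e3 (by simp [hidx1, hidx3]) (by simp [hidx3]) hht3)
      (cross_dn htr e1 e3 ho1) (cross_up h6' e1 e3 (by simp [hidx1, hidx3]) (by simp [hidx3]) hht3)
      (cross_dn htr' e1 e3 ho1') q13
    have c21 := penc_inj (cross_up h6 e2 e1 (by simp [hidx1, hidx2]) (by simp [hidx1]) hht1)
      (cross_dn htr e2 e1 ho2) (cross_up h6' e2 e1 (by simp [hidx1, hidx2]) (by simp [hidx1]) hht1)
      (cross_dn htr' e2 e1 ho2') q21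
    have c23 := penc_inj (cross_up h6 e2 e3 (by simp [hidx2, hidx3]) (by simp [hidx3]) hht3)
      (cross_dn htr e2 e3 ho2) (cross_up h6' e2 e3 (by simp [hidx2, hidx3]) (by simp [hidx3]) hht3)
      (cross_dn htr' e2 e3 ho2') q23
    have c31 := penc_inj (cross_up h6 e3 e1 (by simp [hidx1, hidx3]) (by simp [hidx1]) hht1)
      (cross_dn htr e3 e1 ho3) (cross_up h6' e3 e1 (by simp [hidx1, hidx3]) (by simp [hidx1]) hht1)
      (cross_dn htr' e3 e1 ho3') q31
    have c32 := penc_inj (cross_up h6 e3 e2 (by simp [hidx2, hidx3]) (by simp [hidx2]) hht2)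
      (cross_dn htr e3 e2 ho3) (cross_up h6' e3 e2 (by simp [hidx2, hidx3]) (by simp [hidx2]) hht2)
      (cross_dn htr' e3 e2 ho3') q32
    have s1 : ∀ x y : Fin d₁, R (e1 x) (e1 y) = R' (e1 x) (e1 y) := fun x y =>
      propext ((same_iff hirr htr e1 ho1 x y).trans (same_iff hirr' htr' e1 ho1' x y).symm)
    have s2 : ∀ x y : Fin d₂, R (e2 x) (e2 y) = R' (e2 x) (e2 y) := fun x y =>
      propext ((same_iff hirr htr e2 ho2 x y).trans (same_iff hirr' htr' e2 ho2' x y).symm)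
    have s3 : ∀ x y : Fin d₃, R (e3 x) (e3 y) = R' (e3 x) (e3 y) := fun x y =>
      propext ((same_iff hirr htr e3 ho3 x y).trans (same_iff hirr' htr' e3 ho3' x y).symm)
    funext u v
    rcases u with x | x | x <;> rcases v with y | y | y
    · exact s1 x y
    · exact congrFun (congrFun c12 x) y
    · exact congrFun (congrFun c13 x) y
    · exact congrFun (congrFun c21 x) y
    · exact s2 x y
    · exact congrFun (congrFun c23 x) y
    · exact congrFun (congrFun c31 x) y
    · exact congrFun (congrFun c32 x) y
    · exact s3 x y
end

section
/- If L₁ is a context-free language and L₂ is a regular language over the same alphabet, then L₁ ∩ L₂ is context-free. -/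
set_option linter.unusedSectionVars false

namespace IntRegCF

open ContextFreeGrammar

variable {T : Type} {σ : Type} [Fintype σ]

/-- New nonterminal type for the product grammar. -/
abbrev NT' (T σ : Type) (g : ContextFreeGrammar.{0} T) : Type :=
  Unit ⊕ (σ × Symbol T g.NT × σ)

variable {g : ContextFreeGrammar.{0} T}

/-- Lift a list of symbols to a chain of triple nonterminals, given the
starting state and a list of successive states. -/
def lifts (g : ContextFreeGrammar.{0} T) :
    σ → List (Symbol T g.NT) → List σ → List (Symbol T (NT' T σ g))
  | _, [], _ => []
  | _, _ :: _, [] => []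
  | p, s :: l, q :: qs => Symbol.nonterminal (Sum.inr (p, s, q)) :: lifts g q l qs

/-- The lifted version of a rule of `g`. -/
def liftRule (g : ContextFreeGrammar.{0} T) (r : ContextFreeRule T g.NT) (p : σ) (qs : List σ) :
    ContextFreeRule T (NT' T σ g) :=
  ⟨Sum.inr (p, Symbol.nonterminal r.input, qs.getLastD p), lifts g p r.output qs⟩

/-- Rules resolving lifted terminals (and harmless junk loops for nonterminal symbols). -/
def termRule (g : ContextFreeGrammar.{0} T) (M : DFA T σ) (p : σ) (s : Symbol T g.NT) :
    ContextFreeRule T (NT' T σ g) :=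
  match s with
  | Symbol.terminal a => ⟨Sum.inr (p, Symbol.terminal a, M.step p a), [Symbol.terminal a]⟩
  | Symbol.nonterminal A =>
      ⟨Sum.inr (p, Symbol.nonterminal A, p),
        [Symbol.nonterminal (Sum.inr (p, Symbol.nonterminal A, p))]⟩

/-- Starting rules. -/
def startRule (g : ContextFreeGrammar.{0} T) (M : DFA T σ) (q : σ) :
    ContextFreeRule T (NT' T σ g) :=
  ⟨Sum.inl (), [Symbol.nonterminal (Sum.inr (M.start, Symbol.nonterminal g.initial, q))]⟩

open Classical in
/-- The product grammar. -/
@[reducible]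
noncomputable def prodG (g : ContextFreeGrammar.{0} T) (M : DFA T σ) :
    ContextFreeGrammar.{0} T :=
  ⟨NT' T σ g, Sum.inl (),
    ((Set.toFinite M.accept).toFinset.image (startRule g M)) ∪
    ((g.rules.sigma (fun r => (Finset.univ : Finset (σ × (Fin r.output.length → σ))))).image
      (fun x => liftRule g x.1 x.2.1 (List.ofFn x.2.2))) ∪
    ((Finset.univ ×ˢ g.rules.biUnion (fun r => r.output.toFinset)).image
      (fun x => termRule g M x.1 x.2))⟩

variable {M : DFA T σ}

lemma mem_prodG_rules {r' : ContextFreeRule T (NT' T σ g)} :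
    r' ∈ (prodG g M).rules ↔
      (∃ q ∈ M.accept, r' = startRule g M q) ∨
      (∃ r ∈ g.rules, ∃ p : σ, ∃ qs : List σ, qs.length = r.output.length ∧
        r' = liftRule g r p qs) ∨
      (∃ p : σ, ∃ s : Symbol T g.NT, (∃ r ∈ g.rules, s ∈ r.output) ∧ r' = termRule g M p s) := by
  classical
  simp only [prodG, Finset.mem_union, Finset.mem_image, Finset.mem_sigma, Finset.mem_product,
    Finset.mem_biUnion, Set.Finite.mem_toFinset, List.mem_toFinset, Finset.mem_univ,
    true_and, and_true]
  constructor
  · rintro ((⟨q, hq, rfl⟩ | ⟨⟨r, p, f⟩, hr, rfl⟩) | ⟨⟨p, s⟩, hs, rfl⟩)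
    · exact Or.inl ⟨q, hq, rfl⟩
    · exact Or.inr (Or.inl ⟨r, hr, p, List.ofFn f, List.length_ofFn (f := f), rfl⟩)
    · exact Or.inr (Or.inr ⟨p, s, hs, rfl⟩)
  · rintro (⟨q, hq, rfl⟩ | ⟨r, hr, p, qs, hlen, rfl⟩ | ⟨p, s, hs, rfl⟩)
    · exact Or.inl (Or.inl ⟨q, hq, rfl⟩)
    · refine Or.inl (Or.inr ⟨⟨r, p, fun i => qs.get (i.cast hlen.symm)⟩, hr, ?_⟩)
      have hq : List.ofFn (fun i : Fin r.output.length => qs.get (i.cast hlen.symm)) = qs := by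
        apply List.ext_getElem
        · simp [hlen]
        · intro i h1 h2
          simp [List.get]
      simp only [hq]
    · exact Or.inr ⟨⟨p, s⟩, hs, rfl⟩


/-- Projection of lifted symbols back to the original grammar. -/
def projSym (g : ContextFreeGrammar.{0} T) : Symbol T (NT' T σ g) → Symbol T g.NT
  | Symbol.terminal a => Symbol.terminal a
  | Symbol.nonterminal (Sum.inl _) => Symbol.nonterminal g.initial
  | Symbol.nonterminal (Sum.inr (_, s, _)) => s

lemma map_projSym_lifts (p : σ) (l : List (Symbol T g.NT)) (qs : List σ)
    (h : qs.length = l.length) : (lifts g p l qs).map (projSym g) = l := by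
  induction l generalizing p qs with
  | nil => cases qs with
    | nil => rfl
    | cons q qs => simp at h
  | cons s l ih =>
    cases qs with
    | nil => simp at h
    | cons q qs =>
      simp only [lifts, List.map_cons, projSym]
      rw [ih q qs (by simpa using h)]

lemma proj_produces {u v : List (Symbol T (NT' T σ g))} (h : (prodG g M).Produces u v) :
    g.Derives (u.map (projSym g)) (v.map (projSym g)) := by
  obtain ⟨r', hr', hrw⟩ := h
  obtain ⟨x, y, rfl, rfl⟩ := hrw.exists_parts
  rw [mem_prodG_rules] at hr'
  rcases hr' with ⟨q, hq, rfl⟩ | ⟨r, hr, p, qs, hlen, rfl⟩ | ⟨p, s, hs, rfl⟩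
  · simp only [startRule, List.map_append, List.map_cons, List.map_nil, projSym]
    rfl
  · simp only [liftRule, List.map_append, List.map_cons, List.map_nil, projSym]
    rw [map_projSym_lifts p r.output qs hlen]
    exact Produces.single ⟨r, hr, r.rewrites_of_exists_parts _ _⟩
  · cases s with
    | terminal a =>
      simp only [termRule, List.map_append, List.map_cons, List.map_nil, projSym]
      rfl
    | nonterminal A =>
      simp only [termRule, List.map_append, List.map_cons, List.map_nil, projSym]
      rfl

lemma proj_derives {u v : List (Symbol T (NT' T σ g))} (h : (prodG g M).Derives u v) :
    g.Derives (u.map (projSym g)) (v.map (projSym g)) := by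
  induction h with
  | refl => rfl
  | tail _ hp ih => exact ih.trans (proj_produces hp)


/-- `Chain M p l q`: the symbol string `l` consistently tracks DFA states from `p` to `q`. -/
inductive Chain (g : ContextFreeGrammar.{0} T) (M : DFA T σ) :
    σ → List (Symbol T (NT' T σ g)) → σ → Prop
  | nil (p : σ) : Chain g M p [] p
  | term {p q : σ} {a : T} {l} (h : Chain g M (M.step p a) l q) :
      Chain g M p (Symbol.terminal a :: l) q
  | nt {p p' q : σ} {s : Symbol T g.NT} {l} (h : Chain g M p' l q) :
      Chain g M p (Symbol.nonterminal (Sum.inr (p, s, p')) :: l) q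

lemma chain_append {p q : σ} {x y : List (Symbol T (NT' T σ g))} :
    Chain g M p (x ++ y) q ↔ ∃ m, Chain g M p x m ∧ Chain g M m y q := by
  constructor
  · intro h
    induction x generalizing p with
    | nil => exact ⟨p, Chain.nil p, h⟩
    | cons c x ih =>
      rw [List.cons_append] at h
      cases h with
      | term h => obtain ⟨m, h1, h2⟩ := ih h; exact ⟨m, Chain.term h1, h2⟩
      | nt h => obtain ⟨m, h1, h2⟩ := ih h; exact ⟨m, Chain.nt h1, h2⟩
  · rintro ⟨m, h1, h2⟩
    induction h1 with
    | nil => exact h2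
    | term _ ih => exact Chain.term (ih h2)
    | nt _ ih => exact Chain.nt (ih h2)

lemma chain_singleton {m q a b : σ} {s : Symbol T g.NT}
    (h : Chain g M m [Symbol.nonterminal (Sum.inr (a, s, b))] q) : m = a ∧ q = b := by
  cases h with
  | nt h => cases h; exact ⟨rfl, rfl⟩

lemma chain_lifts (p : σ) (l : List (Symbol T g.NT)) (qs : List σ)
    (h : qs.length = l.length) : Chain g M p (lifts g p l qs) (qs.getLastD p) := by
  induction l generalizing p qs with
  | nil =>
    cases qs with
    | nil => exact Chain.nil p
    | cons q qs => simp at h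
  | cons s l ih =>
    cases qs with
    | nil => simp at h
    | cons q qs =>
      simp only [lifts, List.getLastD_cons]
      exact Chain.nt (ih q qs (by simpa using h))

lemma chain_no_start {p q : σ} {l : List (Symbol T (NT' T σ g))} (h : Chain g M p l q) :
    Symbol.nonterminal (Sum.inl ()) ∉ l := by
  induction h with
  | nil => simp
  | term _ ih => simp [ih]
  | nt _ ih => simp [ih]

lemma chain_terminal {p q : σ} {w : List T}
    (h : Chain g M p (w.map Symbol.terminal) q) : M.evalFrom p w = q := by
  induction w generalizing p with
  | nil => cases h; rfl
  | cons a w ih =>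
    rw [List.map_cons] at h
    cases h with
    | term h => exact ih h

/-- The soundness invariant. -/
def Inv (g : ContextFreeGrammar.{0} T) (M : DFA T σ) (u : List (Symbol T (NT' T σ g))) : Prop :=
  u = [Symbol.nonterminal (Sum.inl ())] ∨ ∃ q ∈ M.accept, Chain g M M.start u q

lemma inv_preserved {u v : List (Symbol T (NT' T σ g))} (hu : Inv g M u)
    (h : (prodG g M).Produces u v) : Inv g M v := by
  obtain ⟨r', hr', hrw⟩ := h
  obtain ⟨x, y, hu', rfl⟩ := hrw.exists_parts
  rw [mem_prodG_rules] at hr'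
  rcases hu with hstart | ⟨q, hq, hchain⟩
  · -- u = [S']
    rw [hstart] at hu'
    have hx : x = [] := by
      cases x with
      | nil => rfl
      | cons c x =>
        have := congrArg List.length hu'
        simp at this
    subst hx
    simp only [List.nil_append] at hu' ⊢
    have hy : y = [] := by
      cases y with
      | nil => rfl
      | cons c y =>
        have := congrArg List.length hu'
        simp at this
    subst hy
    have hin : r'.input = Sum.inl () := by
      exact (by simpa using congrArg (fun l => l.head?) hu' : Sum.inl () = r'.input).symm
    rcases hr' with ⟨q', hq', rfl⟩ | ⟨r, hr, p, qs, hlen, rfl⟩ | ⟨p, s, hs, rfl⟩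
    · right
      refine ⟨q', hq', ?_⟩
      simp only [startRule, List.append_nil]
      exact Chain.nt (Chain.nil q')
    · simp [liftRule] at hin
    · cases s <;> simp [termRule] at hin
  · -- good chain case
    subst hu'
    have hnotin : Symbol.nonterminal (Sum.inl ()) ∉ x ++ [Symbol.nonterminal r'.input] ++ y :=
      chain_no_start hchain
    rcases hr' with ⟨q', hq', rfl⟩ | ⟨r, hr, p, qs, hlen, rfl⟩ | ⟨p, s, hs, rfl⟩
    · exact absurd (by simp [startRule]) hnotin
    · right
      refine ⟨q, hq, ?_⟩
      rw [chain_append] at hchain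
      obtain ⟨m1, h1, h3⟩ := hchain
      rw [chain_append] at h1
      obtain ⟨m2, h1, h2⟩ := h1
      obtain ⟨he1, he2⟩ := chain_singleton (g := g) (M := M) h2
      rw [he1] at h1; rw [he2] at h3
      exact chain_append.mpr ⟨qs.getLastD p, chain_append.mpr
        ⟨p, h1, chain_lifts p r.output qs hlen⟩, h3⟩
    · right
      refine ⟨q, hq, ?_⟩
      rw [chain_append] at hchain
      obtain ⟨m1, h1, h3⟩ := hchain
      rw [chain_append] at h1
      obtain ⟨m2, h1, h2⟩ := h1
      cases s with
      | terminal a =>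
        obtain ⟨he1, he2⟩ := chain_singleton (g := g) (M := M) h2
        rw [he1] at h1; rw [he2] at h3
        exact chain_append.mpr ⟨M.step p a, chain_append.mpr
          ⟨p, h1, Chain.term (Chain.nil _)⟩, h3⟩
      | nonterminal A =>
        obtain ⟨he1, he2⟩ := chain_singleton (g := g) (M := M) h2
        rw [he1] at h1; rw [he2] at h3
        exact chain_append.mpr ⟨p, chain_append.mpr
          ⟨p, h1, Chain.nt (Chain.nil _)⟩, h3⟩

lemma inv_derives {u v : List (Symbol T (NT' T σ g))} (hu : Inv g M u)
    (h : (prodG g M).Derives u v) : Inv g M v := by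
  induction h with
  | refl => exact hu
  | tail _ hp ih => exact inv_preserved ih hp


/-- Derivations with an explicit number of steps. -/
inductive DerIn (g : ContextFreeGrammar.{0} T) :
    ℕ → List (Symbol T g.NT) → List (Symbol T g.NT) → Prop
  | refl (u) : DerIn g 0 u u
  | head {n u v w} (h : g.Produces u v) (h' : DerIn g n v w) : DerIn g (n + 1) u w

lemma DerIn.derives {n : ℕ} {u v : List (Symbol T g.NT)} (h : DerIn g n u v) : g.Derives u v := by
  induction h with
  | refl => rfl
  | head hp _ ih => exact hp.trans_derives ih

lemma DerIn.tail {n : ℕ} {u v w : List (Symbol T g.NT)} (h : DerIn g n u v)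
    (h' : g.Produces v w) : DerIn g (n + 1) u w := by
  induction h with
  | refl => exact DerIn.head h' (DerIn.refl _)
  | head hp _ ih => exact DerIn.head hp (ih h')

lemma derives_iff_derIn {u v : List (Symbol T g.NT)} :
    g.Derives u v ↔ ∃ n, DerIn g n u v := by
  constructor
  · intro h
    induction h with
    | refl => exact ⟨0, DerIn.refl _⟩
    | tail _ hp ih => obtain ⟨n, hn⟩ := ih; exact ⟨n + 1, hn.tail hp⟩
  · rintro ⟨n, h⟩
    exact h.derives

lemma rewrites_append_split {N : Type} {r : ContextFreeRule T N} :
    ∀ {u v x : List (Symbol T N)}, r.Rewrites (u ++ v) x →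
      (∃ u', r.Rewrites u u' ∧ x = u' ++ v) ∨ (∃ v', r.Rewrites v v' ∧ x = u ++ v') := by
  intro u
  induction u with
  | nil => intro v x h; exact Or.inr ⟨x, h, rfl⟩
  | cons c u ih =>
    intro v x h
    rw [List.cons_append] at h
    cases h with
    | head s =>
      exact Or.inl ⟨r.output ++ u, ContextFreeRule.Rewrites.head u, by simp⟩
    | cons _ h =>
      rcases ih h with ⟨u', hu', rfl⟩ | ⟨v', hv', rfl⟩
      · exact Or.inl ⟨c :: u', ContextFreeRule.Rewrites.cons c hu', rfl⟩
      · exact Or.inr ⟨v', hv', rfl⟩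

lemma derIn_append_split {n : ℕ} {u v w : List (Symbol T g.NT)}
    (h : DerIn g n (u ++ v) w) :
    ∃ n₁ n₂ w₁ w₂, n = n₁ + n₂ ∧ w = w₁ ++ w₂ ∧ DerIn g n₁ u w₁ ∧ DerIn g n₂ v w₂ := by
  induction n using Nat.strong_induction_on generalizing u v w with
  | _ n IH =>
    cases h with
    | refl => exact ⟨0, 0, u, v, rfl, rfl, DerIn.refl u, DerIn.refl v⟩
    | @head k _ x _ hp h' =>
      obtain ⟨r, hr, hrw⟩ := hp
      rcases rewrites_append_split hrw with ⟨u', hu', rfl⟩ | ⟨v', hv', rfl⟩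
      · obtain ⟨n₁, n₂, w₁, w₂, rfl, rfl, h1, h2⟩ := IH k (by omega) h'
        exact ⟨n₁ + 1, n₂, w₁, w₂, by omega, rfl, DerIn.head ⟨r, hr, hu'⟩ h1, h2⟩
      · obtain ⟨n₁, n₂, w₁, w₂, rfl, rfl, h1, h2⟩ := IH k (by omega) h'
        exact ⟨n₁, n₂ + 1, w₁, w₂, by omega, rfl, h1, DerIn.head ⟨r, hr, hv'⟩ h2⟩

lemma derIn_terminal {n : ℕ} {w : List T} {v : List (Symbol T g.NT)}
    (h : DerIn g n (w.map Symbol.terminal) v) : v = w.map Symbol.terminal := by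
  cases h with
  | refl => rfl
  | head hp h' =>
    exfalso
    obtain ⟨r, _, hrw⟩ := hp
    obtain ⟨x, y, hxy, -⟩ := hrw.exists_parts
    have : Symbol.nonterminal r.input ∈ w.map (Symbol.terminal (N := g.NT)) := by
      rw [hxy]; simp
    simp only [List.mem_map] at this
    obtain ⟨a, -, ha⟩ := this
    cases ha

lemma rewrites_singleton_nt {N : Type} {r : ContextFreeRule T N} {A : N}
    {v : List (Symbol T N)} (h : r.Rewrites [Symbol.nonterminal A] v) :
    r.input = A ∧ v = r.output := by
  cases h with
  | head => simp
  | cons _ h => cases h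


lemma map_terminal_split {w : List T} {x y : List (Symbol T g.NT)}
    (h : w.map Symbol.terminal = x ++ y) :
    ∃ w₁ w₂, w = w₁ ++ w₂ ∧ x = w₁.map Symbol.terminal ∧ y = w₂.map Symbol.terminal := by
  rw [List.map_eq_append_iff] at h
  obtain ⟨w₁, w₂, rfl, rfl, rfl⟩ := h
  exact ⟨w₁, w₂, rfl, rfl, rfl⟩

lemma list_lift (M : DFA T σ) {n : ℕ}
    (IH : ∀ k, k ≤ n → ∀ A : g.NT, ∀ w : List T, ∀ p : σ,
      DerIn g k [Symbol.nonterminal A] (w.map Symbol.terminal) →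
      (prodG g M).Derives
        [Symbol.nonterminal (Sum.inr (p, Symbol.nonterminal A, M.evalFrom p w))]
        (w.map Symbol.terminal)) :
    ∀ out : List (Symbol T g.NT), (∀ s ∈ out, ∃ r ∈ g.rules, s ∈ r.output) →
    ∀ m, m ≤ n → ∀ w : List T, ∀ p : σ, DerIn g m out (w.map Symbol.terminal) →
    ∃ qs : List σ, qs.length = out.length ∧ qs.getLastD p = M.evalFrom p w ∧
      (prodG g M).Derives (lifts g p out qs) (w.map Symbol.terminal) := by
  intro out
  induction out with
  | nil =>
    intro _ m _ w p h
    have hw : w.map Symbol.terminal = ([] : List T).map Symbol.terminal := derIn_terminal h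
    have hwnil : w = [] := by simpa using hw
    subst hwnil
    exact ⟨[], rfl, rfl, Derives.refl _⟩
  | cons s out ihout =>
    intro hsym m hm w p h
    obtain ⟨n₁, n₂, w₁', w₂', rfl, hw, h1, h2⟩ :=
      derIn_append_split (u := [s]) (v := out) h
    obtain ⟨w₁, w₂, rfl, rfl, rfl⟩ := map_terminal_split hw
    cases s with
    | terminal a =>
      have hw1 : w₁.map Symbol.terminal = ([a] : List T).map Symbol.terminal :=
        derIn_terminal h1
      have hw1' : w₁ = [a] := by
        cases w₁ with
        | nil => simp at hw1
        | cons b t =>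
          simp only [List.map_cons, List.map_nil, List.cons.injEq] at hw1
          obtain ⟨hb, ht⟩ := hw1
          simp only [Symbol.terminal.injEq] at hb
          simp [hb, List.map_eq_nil_iff.mp ht]
      subst hw1'
      obtain ⟨qs, hlen, hlast, hder⟩ :=
        ihout (fun s hs => hsym s (List.mem_cons_of_mem _ hs)) n₂ (by omega) w₂ (M.step p a) h2
      refine ⟨M.step p a :: qs, by simp [hlen], ?_, ?_⟩
      · rw [List.getLastD_cons]
        exact hlast
      · simp only [lifts]
        have hstep : (prodG g M).Produces
            (Symbol.nonterminal (Sum.inr (p, Symbol.terminal a, M.step p a)) ::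
              lifts g (M.step p a) out qs)
            (Symbol.terminal a :: lifts g (M.step p a) out qs) := by
          refine ⟨termRule g M p (Symbol.terminal a), ?_, ?_⟩
          · rw [mem_prodG_rules]
            exact Or.inr (Or.inr ⟨p, _, hsym _ List.mem_cons_self, rfl⟩)
          · exact ContextFreeRule.Rewrites.head _
        refine hstep.trans_derives ?_
        have := hder.append_left [Symbol.terminal a]
        exact this
    | nonterminal A =>
      have hd := IH n₁ (by omega) A w₁ p h1
      obtain ⟨qs, hlen, hlast, hder⟩ :=
        ihout (fun s hs => hsym s (List.mem_cons_of_mem _ hs)) n₂ (by omega) w₂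
          (M.evalFrom p w₁) h2
      refine ⟨M.evalFrom p w₁ :: qs, by simp [hlen], ?_, ?_⟩
      · rw [List.getLastD_cons, M.evalFrom_of_append]
        exact hlast
      · simp only [lifts, List.map_append]
        have d1 := hd.append_right (lifts g (M.evalFrom p w₁) out qs)
        have d2 := hder.append_left (w₁.map Symbol.terminal)
        exact Derives.trans d1 d2

lemma complete (M : DFA T σ) : ∀ n, ∀ A : g.NT, ∀ w : List T, ∀ p : σ,
    DerIn g n [Symbol.nonterminal A] (w.map Symbol.terminal) →
    (prodG g M).Derives
      [Symbol.nonterminal (Sum.inr (p, Symbol.nonterminal A, M.evalFrom p w))]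
      (w.map Symbol.terminal) := by
  intro n
  induction n using Nat.strong_induction_on with
  | _ n IHn =>
    intro A w p h
    generalize he : w.map Symbol.terminal = ww at h
    cases h with
    | refl =>
      exfalso
      cases w with
      | nil => simp_all
      | cons b t => simp_all
    | @head k _ v _ hp h' =>
      subst he
      obtain ⟨r, hr, hrw⟩ := hp
      obtain ⟨hin, rfl⟩ := rewrites_singleton_nt hrw
      subst hin
      obtain ⟨qs, hlen, hlast, hder⟩ :=
        list_lift M (n := k) (fun j hj => IHn j (by omega)) r.output
          (fun s hs => ⟨r, hr, hs⟩) k le_rfl w p h'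
      have hstep : (prodG g M).Produces
          [Symbol.nonterminal (Sum.inr (p, Symbol.nonterminal r.input, M.evalFrom p w))]
          (lifts g p r.output qs) := by
        refine ⟨liftRule g r p qs, ?_, ?_⟩
        · rw [mem_prodG_rules]
          exact Or.inr (Or.inl ⟨r, hr, p, qs, hlen, rfl⟩)
        · rw [← hlast]
          exact ContextFreeRule.Rewrites.input_output
      exact hstep.trans_derives hder

lemma prodG_language (g : ContextFreeGrammar.{0} T) (M : DFA T σ) :
    (prodG g M).language = g.language ⊓ M.accepts := by
  ext w
  constructor
  · intro hw
    rw [mem_language_iff] at hw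
    rw [Language.mem_inf]
    constructor
    · rw [mem_language_iff]
      have := proj_derives hw
      simpa [projSym, List.map_map, Function.comp_def] using this
    · have hinv := inv_derives (Or.inl rfl) hw
      rcases hinv with heq | ⟨q, hq, hchain⟩
      · exfalso
        cases w with
        | nil => simp_all
        | cons b t => simp_all
      · rw [DFA.mem_accepts]
        have hev := chain_terminal hchain
        show M.evalFrom M.start w ∈ M.accept
        rw [hev]
        exact hq
  · rw [Language.mem_inf]
    rintro ⟨h1, h2⟩
    rw [mem_language_iff] at h1 ⊢
    obtain ⟨n, hn⟩ := derives_iff_derIn.mp h1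
    have hmain := complete M n g.initial w M.start hn
    have hstep : (prodG g M).Produces [Symbol.nonterminal (Sum.inl ())]
        [Symbol.nonterminal
          (Sum.inr (M.start, Symbol.nonterminal g.initial, M.evalFrom M.start w))] := by
      refine ⟨startRule g M (M.evalFrom M.start w), ?_, ?_⟩
      · rw [mem_prodG_rules]
        exact Or.inl ⟨_, h2, rfl⟩
      · exact ContextFreeRule.Rewrites.input_output
    exact hstep.trans_derives hmain

end IntRegCF

/-- The intersection of a context-free language with a regular language is
context-free. -/
theorem stmt8 {α : Type} (L₁ L₂ : Language α)
    (h₁ : L₁.IsContextFree) (h₂ : L₂.IsRegular) :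
    (L₁ ⊓ L₂ : Language α).IsContextFree := by
  obtain ⟨g, rfl⟩ := h₁
  obtain ⟨σ, hfin, M, rfl⟩ := h₂
  haveI := hfin
  exact ⟨IntRegCF.prodG g M, IntRegCF.prodG_language g M⟩
end

section
/- The sisterhood-checking automaton is correct: a word w of length n over alphabet {e₁,…,e_n} encoding an involutive fixed-point-free pairing E of positions {1,…,n} is accepted by the automaton A₂ if and only if E respects sisterhood, i.e., whenever positions i and i′ are paired by E and (i,j), (i′,j′) are sister-bracket pairs, then j and j′ are paired by E. -/
/-- One step of the sisterhood-checking automaton `A₂`, processing position `i`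
of the code of the pairing `E`.  The state is `some ξ` (current stack `ξ`) or
`none` (failure).  At position `i` the automaton reads the letter `e_{E i}`:
if `i` is not a bracket it moves on; if `i` is a bracket but `E i` is not, it
fails; if `i` is an opening sister bracket (`i < s i`) it pushes `e_{s (E i)}`;
if `i` is a closing sister bracket it pops the stack and compares the popped
letter with `e_{E i}`, failing on mismatch. -/
def step (n : ℕ) (isB : Fin n → Bool) (s E : Fin n → Fin n)
    (st : Option (List (Fin n))) (i : Fin n) : Option (List (Fin n)) :=
  match st with
  | none => none
  | some ξ =>
    if isB i then
      if isB (E i) then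
        if (i : ℕ) < (s i : ℕ) then some (s (E i) :: ξ)
        else
          match ξ with
          | [] => none
          | t :: ξ' => if t = E i then some ξ' else none
      else none
    else some ξ

/-- The automaton accepts iff, after processing all `n` letters starting from
the empty stack, it ends with an empty stack without failing. -/
def accepts (n : ℕ) (isB : Fin n → Bool) (s E : Fin n → Fin n) : Prop :=
  (List.finRange n).foldl (step n isB s E) (some []) = some []

def StackInv {n : ℕ} (isB : Fin n → Bool) (s E : Fin n → Fin n) (k : ℕ)
    (ξ : List (Fin n)) : Prop :=
  ∃ L : List (Fin n), ξ = L.map (fun j => s (E j)) ∧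
    L.Pairwise (fun (a b : Fin n) => (b : ℕ) < (a : ℕ)) ∧
    ∀ j : Fin n, j ∈ L ↔ (isB j = true ∧ (j : ℕ) < (s j : ℕ) ∧ (j : ℕ) < k ∧ k ≤ (s j : ℕ))

theorem closedHead {n : ℕ} {isB : Fin n → Bool} {s E : Fin n → Fin n}
    (hsB : ∀ i, isB i = true → isB (s i) = true)
    (hsinv : ∀ i, isB i = true → s (s i) = i)
    (hwn : ∀ i j, isB i = true → isB j = true →
      (i : ℕ) < (s i : ℕ) → (j : ℕ) < (s j : ℕ) → (i : ℕ) < (j : ℕ) →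
      (j : ℕ) < (s i : ℕ) → (s j : ℕ) < (s i : ℕ))
    {k : ℕ} {hk : k < n} {ξ : List (Fin n)}
    (hI : StackInv isB s E k ξ) (hB : isB ⟨k, hk⟩ = true)
    (hlt : (s ⟨k, hk⟩ : ℕ) < k) :
    ∃ ξ₂, ξ = s (E (s ⟨k, hk⟩)) :: ξ₂ ∧ StackInv isB s E (k + 1) ξ₂ := by
  obtain ⟨L, hξ, hsort, hm⟩ := hI
  set K : Fin n := ⟨k, hk⟩ with hK
  have hKval : (K : ℕ) = k := rfl
  have hssK : s (s K) = K := hsinv K hB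
  have hsKB : isB (s K) = true := hsB K hB
  have hmem : s K ∈ L := by
    rw [hm]
    refine ⟨hsKB, ?_, hlt, ?_⟩
    · rw [hssK, hKval]; exact hlt
    · rw [hssK, hKval]
  cases L with
  | nil => simp at hmem
  | cons a L' =>
    have hsorted := List.pairwise_cons.mp hsort
    have ha : a = s K := by
      rcases List.mem_cons.mp hmem with h | h
      · exact h.symm
      · exfalso
        obtain ⟨hBa, halt, hak, hka⟩ := (hm a).mp (List.mem_cons_self (a := a) (l := L'))
        have h1 : (s K : ℕ) < (a : ℕ) := hsorted.1 _ h
        have h2 := hwn (s K) a hsKB hBa (by rw [hssK, hKval]; exact hlt) halt h1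
          (by rw [hssK, hKval]; exact hak)
        rw [hssK, hKval] at h2
        omega
    subst ha
    refine ⟨L'.map (fun j => s (E j)), by rw [hξ]; rfl, L', rfl, hsorted.2, ?_⟩
    intro j
    constructor
    · intro hj
      obtain ⟨hBj, hjlt, hjk, hkj⟩ := (hm j).mp (List.mem_cons_of_mem _ hj)
      refine ⟨hBj, hjlt, by omega, ?_⟩
      have hne : (s j : ℕ) ≠ k := by
        intro hsj
        have : s j = K := Fin.ext (by rw [hsj, hKval])
        have : j = s K := by rw [← hsinv j hBj, this]
        have := hsorted.1 j hj
        omega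
      omega
    · rintro ⟨hBj, hjlt, hjk1, hk1j⟩
      have hjk : (j : ℕ) < k := by
        rcases Nat.lt_or_ge (j : ℕ) k with h | h
        · exact h
        · exfalso
          have : j = K := Fin.ext (by omega)
          rw [this] at hjlt
          omega
      have hj : j ∈ s K :: L' := (hm j).mpr ⟨hBj, hjlt, hjk, by omega⟩
      rcases List.mem_cons.mp hj with h | h
      · exfalso
        rw [h] at hk1j
        rw [hssK, hKval] at hk1j
        omega
      · exact h

theorem stepInv {n : ℕ} {isB : Fin n → Bool} {s E : Fin n → Fin n}
    (hEB : ∀ i, isB i = true → isB (E i) = true)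
    (hsB : ∀ i, isB i = true → isB (s i) = true)
    (hsinv : ∀ i, isB i = true → s (s i) = i)
    (hsfp : ∀ i, isB i = true → s i ≠ i)
    (hwn : ∀ i j, isB i = true → isB j = true →
      (i : ℕ) < (s i : ℕ) → (j : ℕ) < (s j : ℕ) → (i : ℕ) < (j : ℕ) →
      (j : ℕ) < (s i : ℕ) → (s j : ℕ) < (s i : ℕ))
    {k : ℕ} {hk : k < n} {ξ ξ' : List (Fin n)}
    (hI : StackInv isB s E k ξ)
    (h : step n isB s E (some ξ) ⟨k, hk⟩ = some ξ') :
    StackInv isB s E (k + 1) ξ' ∧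
      (isB ⟨k, hk⟩ = true → (s ⟨k, hk⟩ : ℕ) < k → E (s ⟨k, hk⟩) = s (E ⟨k, hk⟩)) := by
  set K : Fin n := ⟨k, hk⟩ with hK
  have hKval : (K : ℕ) = k := rfl
  obtain ⟨L, hξ, hsort, hm⟩ := hI
  by_cases hB : isB K = true
  · by_cases hlt : (K : ℕ) < (s K : ℕ)
    · -- opening
      by_cases hBE : isB (E K) = true
      · simp only [step, hB, hBE, hlt, if_true, Option.some.injEq] at h
        subst h
        constructor
        · refine ⟨K :: L, by rw [hξ]; rfl, ?_, ?_⟩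
          · rw [List.pairwise_cons]
            refine ⟨fun b hb => ?_, hsort⟩
            exact ((hm b).mp hb).2.2.1
          · intro j
            rw [List.mem_cons, hm]
            constructor
            · rintro (rfl | ⟨hBj, hjlt, hjk, hkj⟩)
              · exact ⟨hB, hlt, by omega, by rw [hKval] at hlt; omega⟩
              · refine ⟨hBj, hjlt, by omega, ?_⟩
                have hne : (s j : ℕ) ≠ k := by
                  intro hsj
                  have hsK : s j = K := Fin.ext (by rw [hsj, hKval])
                  have hj2 : j = s K := by rw [← hsinv j hBj, hsK]
                  rw [hj2] at hjk
                  omega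
                omega
            · rintro ⟨hBj, hjlt, hjk1, hk1j⟩
              by_cases hjK : j = K
              · exact Or.inl hjK
              · refine Or.inr ⟨hBj, hjlt, ?_, by omega⟩
                have : (j : ℕ) ≠ k := fun hc => hjK (Fin.ext (by rw [hc, hKval]))
                omega
        · intro _ hlt'
          omega
      · rw [Bool.not_eq_true] at hBE
        simp [step, hB, hBE] at h
    · -- closing
      have hlt' : (s K : ℕ) < k := by
        have : s K ≠ K := hsfp K hB
        have : (s K : ℕ) ≠ (K : ℕ) := fun hc => this (Fin.ext hc)
        omega
      obtain ⟨ξ₂, hξ2, hI'⟩ := closedHead hsB hsinv hwn ⟨L, hξ, hsort, hm⟩ hB hlt'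
      by_cases hBE : isB (E K) = true
      · rw [hξ2] at h
        simp only [step, hB, hBE, hlt, if_true, if_false] at h
        by_cases heq : s (E (s K)) = E K
        · rw [if_pos heq, Option.some.injEq] at h
          subst h
          refine ⟨hI', fun _ _ => ?_⟩
          have h2 := congrArg s heq
          rwa [hsinv (E (s K)) (hEB (s K) (hsB K hB))] at h2
        · rw [if_neg heq] at h
          exact absurd h (by simp)
      · rw [Bool.not_eq_true] at hBE
        simp [step, hB, hBE] at h
  · -- not a bracket
    rw [Bool.not_eq_true] at hB
    simp only [step, hB, Bool.false_eq_true, if_false, Option.some.injEq] at h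
    subst h
    constructor
    · refine ⟨L, hξ, hsort, ?_⟩
      intro j
      rw [hm]
      constructor
      · rintro ⟨hBj, hjlt, hjk, hkj⟩
        refine ⟨hBj, hjlt, by omega, ?_⟩
        have hne : (s j : ℕ) ≠ k := by
          intro hsj
          have hsK : s j = K := Fin.ext (by rw [hsj, hKval])
          have := hsB j hBj
          rw [hsK, hB] at this
          exact absurd this (by simp)
        omega
      · rintro ⟨hBj, hjlt, hjk1, hk1j⟩
        have : (j : ℕ) ≠ k := by
          intro hc
          have : j = K := Fin.ext (by rw [hc, hKval])
          rw [this, hB] at hBj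
          exact absurd hBj (by simp)
        exact ⟨hBj, hjlt, by omega, by omega⟩
    · intro hB' _
      rw [hB] at hB'
      exact absurd hB' (by simp)

theorem foldl_step_none {n : ℕ} (isB : Fin n → Bool) (s E : Fin n → Fin n)
    (l : List (Fin n)) : l.foldl (step n isB s E) none = none := by
  induction l with
  | nil => rfl
  | cons a l ih => simpa [step] using ih

/-- Correctness of the sisterhood-checking automaton: for a fixed-point-free
involutive pairing `E` mapping brackets to brackets, whose code is read by the
automaton, acceptance holds iff `E` respects sisterhood, i.e. `E` maps sister
brackets to sister brackets: `E (s i) = s (E i)` for every bracket `i`. -/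
theorem stmt10 (n : ℕ) (isB : Fin n → Bool) (s E : Fin n → Fin n)
    (hEinv : ∀ i, E (E i) = i) (hEfp : ∀ i, E i ≠ i)
    (hEB : ∀ i, isB i = true → isB (E i) = true)
    (hsB : ∀ i, isB i = true → isB (s i) = true)
    (hsinv : ∀ i, isB i = true → s (s i) = i)
    (hsfp : ∀ i, isB i = true → s i ≠ i)
    (hwn : ∀ i j, isB i = true → isB j = true →
      (i : ℕ) < (s i : ℕ) → (j : ℕ) < (s j : ℕ) → (i : ℕ) < (j : ℕ) →
      (j : ℕ) < (s i : ℕ) → (s j : ℕ) < (s i : ℕ)) :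
    accepts n isB s E ↔ ∀ i, isB i = true → E (s i) = s (E i) := by
  set f := step n isB s E with hf
  set F : ℕ → Option (List (Fin n)) :=
    fun k => ((List.finRange n).take k).foldl f (some []) with hF
  have hFn : F n = (List.finRange n).foldl f (some []) := by
    show ((List.finRange n).take n).foldl f (some []) = _
    rw [List.take_of_length_le (le_of_eq (List.length_finRange (n := n)))]
  have hFsucc : ∀ k (hk : k < n), F (k + 1) = f (F k) ⟨k, hk⟩ := by
    intro k hk
    show ((List.finRange n).take (k+1)).foldl f (some []) = _
    rw [List.take_succ, List.foldl_append]
    have hg : (List.finRange n)[k]? = some ⟨k, hk⟩ := by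
      rw [List.getElem?_eq_getElem (by simp [hk])]
      simp
    rw [hg]
    rfl
  have hF0 : F 0 = some [] := rfl
  have hInv0 : StackInv isB s E 0 [] := by
    refine ⟨[], rfl, List.Pairwise.nil, fun j => ?_⟩
    simp
  constructor
  · -- acceptance → sisterhood
    intro hacc
    have hne : ∀ k, k ≤ n → F k ≠ none := by
      intro k hkn hnone
      have : F n = none := by
        rw [hFn, ← List.take_append_drop k (List.finRange n), List.foldl_append]
        have : ((List.finRange n).take k).foldl f (some []) = none := hnone
        rw [this]
        exact foldl_step_none isB s E _
      rw [hFn] at this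
      rw [accepts] at hacc
      rw [hacc] at this
      exact absurd this (by simp)
    have key : ∀ k, k ≤ n → ∃ ξ, F k = some ξ ∧ StackInv isB s E k ξ := by
      intro k
      induction k with
      | zero => exact fun _ => ⟨[], hF0, hInv0⟩
      | succ k ih =>
        intro hk1
        have hk : k < n := hk1
        obtain ⟨ξ, hFk, hI⟩ := ih (le_of_lt hk)
        have hstep : F (k + 1) = f (some ξ) ⟨k, hk⟩ := by rw [hFsucc k hk, hFk]
        cases hξ' : f (some ξ) ⟨k, hk⟩ with
        | none => exact absurd (hstep.trans hξ') (hne (k+1) hk1)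
        | some ξ' =>
          exact ⟨ξ', hstep.trans hξ',
            (stepInv hEB hsB hsinv hsfp hwn hI hξ').1⟩
    have hclose : ∀ i : Fin n, isB i = true → (s i : ℕ) < (i : ℕ) →
        E (s i) = s (E i) := by
      intro i hBi hlt
      have hkn : (i : ℕ) < n := i.isLt
      obtain ⟨ξ, hFk, hI⟩ := key (i : ℕ) (le_of_lt hkn)
      have hstep : F ((i : ℕ) + 1) = f (some ξ) ⟨(i : ℕ), hkn⟩ := by
        rw [hFsucc _ hkn, hFk]
      cases hξ' : f (some ξ) ⟨(i : ℕ), hkn⟩ with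
      | none => exact absurd (hstep.trans hξ') (hne _ hkn)
      | some ξ' =>
        have hres := (stepInv hEB hsB hsinv hsfp hwn hI hξ').2
        have hi : (⟨(i : ℕ), hkn⟩ : Fin n) = i := rfl
        rw [hi] at hres
        exact hres hBi hlt
    intro i hBi
    rcases Nat.lt_trichotomy (s i : ℕ) (i : ℕ) with h | h | h
    · exact hclose i hBi h
    · exact absurd (Fin.ext h) (hsfp i hBi)
    · -- opening: use the closing bracket s i
      have hBsi : isB (s i) = true := hsB i hBi
      have h2 := hclose (s i) hBsi (by rw [hsinv i hBi]; exact h)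
      rw [hsinv i hBi] at h2
      have h3 := congrArg s h2
      rw [hsinv (E (s i)) (hEB (s i) hBsi)] at h3
      exact h3.symm
  · -- sisterhood → acceptance
    intro hsis
    have key : ∀ k, k ≤ n → ∃ ξ, F k = some ξ ∧ StackInv isB s E k ξ := by
      intro k
      induction k with
      | zero => exact fun _ => ⟨[], hF0, hInv0⟩
      | succ k ih =>
        intro hk1
        have hk : k < n := hk1
        obtain ⟨ξ, hFk, hI⟩ := ih (le_of_lt hk)
        have hsome : ∃ ξ', f (some ξ) ⟨k, hk⟩ = some ξ' := by
          by_cases hB : isB (⟨k, hk⟩ : Fin n) = true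
          · have hBE : isB (E ⟨k, hk⟩) = true := hEB _ hB
            by_cases hlt : ((⟨k, hk⟩ : Fin n) : ℕ) < (s ⟨k, hk⟩ : ℕ)
            · exact ⟨s (E ⟨k, hk⟩) :: ξ, by simp [hf, step, hB, hBE, hlt]⟩
            · have hlt' : (s (⟨k, hk⟩ : Fin n) : ℕ) < k := by
                have h1 : s ⟨k, hk⟩ ≠ ⟨k, hk⟩ := hsfp _ hB
                have : (s ⟨k, hk⟩ : ℕ) ≠ k := fun hc => h1 (Fin.ext hc)
                simp only [not_lt] at hlt
                omega
              obtain ⟨ξ₂, hξ2, _⟩ := closedHead hsB hsinv hwn hI hB hlt'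
              refine ⟨ξ₂, ?_⟩
              have heq : s (E (s ⟨k, hk⟩)) = E ⟨k, hk⟩ := by
                have := hsis (s ⟨k, hk⟩) (hsB _ hB)
                rw [hsinv _ hB] at this
                exact this.symm
              rw [hξ2]
              simp [hf, step, hB, hBE, hlt, heq]
          · rw [Bool.not_eq_true] at hB
            exact ⟨ξ, by simp [hf, step, hB]⟩
        obtain ⟨ξ', hξ'⟩ := hsome
        refine ⟨ξ', by rw [hFsucc k hk, hFk]; exact hξ', ?_⟩
        exact (stepInv hEB hsB hsinv hsfp hwn hI hξ').1
    obtain ⟨ξ, hFn', hI⟩ := key n le_rfl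
    obtain ⟨L, hξ, _, hm⟩ := hI
    have hL : L = [] := by
      apply List.eq_nil_iff_forall_not_mem.mpr
      intro j hj
      have := ((hm j).mp hj).2.2.2
      have := (s j).isLt
      omega
    rw [accepts, ← hFn, hFn', hξ, hL]
    rfl
end
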